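/- Let (X,d,μ) be a metric measure space, Ω ⊂ X open, a ∈ X, p > 1, and let (Ẋ, d̂_a, μ̂_a) be the sphericalization with dμ̂_a(x) = dμ(x)/(1+d(x,a))^{2p}. A function u: Ω → ℝ is a p-superminimizer in Ω with respect to (d,μ) if and only if it is a p-superminimizer in Ω with respect to (d̂_a, μ̂_a). The same holds for minimizers, and hence p-harmonicity (continuous minimizers) and superharmonicity are preserved under sphericalization. -/

import Mathlib

open MeasureTheory Metric Set ENNReal Filter

/-- A (nonconstant, compact, rectifiable) curve with respect to a distance
function `D`, parameterized by arc length on `[0, len]`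
(so that it is `1`-Lipschitz with respect to `D`). -/
structure CurveD (Y : Type*) (D : Y → Y → ℝ) where
  toFun : ℝ → Y
  len : ℝ
  len_pos : 0 < len
  lip : ∀ s ∈ Set.Icc (0:ℝ) len, ∀ t ∈ Set.Icc (0:ℝ) len, D (toFun s) (toFun t) ≤ |s - t|

/-- The curve lies in the set `Ω`. -/
def CurveD.inSet {Y : Type*} {D : Y → Y → ℝ} (γ : CurveD Y D) (Ω : Set Y) : Prop :=
  ∀ t ∈ Set.Icc (0:ℝ) γ.len, γ.toFun t ∈ Ω

/-- Line integral `∫_γ ρ ds̃`, where the arc length element is `ds̃ = w ds`. -/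
noncomputable def lineInt {Y : Type*} {D : Y → Y → ℝ} (γ : CurveD Y D) (ρ w : Y → ℝ≥0∞) : ℝ≥0∞ :=
  ∫⁻ t in Set.Icc (0:ℝ) γ.len, ρ (γ.toFun t) * w (γ.toFun t)

/-- The `p`-modulus of a curve family `Γ`, with energy measure `μ` and arc
length weighted by `w`. -/
noncomputable def pMod {Y : Type*} [MeasurableSpace Y] {D : Y → Y → ℝ} (p : ℝ) (μ : Measure Y)
    (w : Y → ℝ≥0∞) (Γ : Set (CurveD Y D)) : ℝ≥0∞ :=
  ⨅ (ρ : Y → ℝ≥0∞) (_ : Measurable ρ) (_ : ∀ γ ∈ Γ, 1 ≤ lineInt γ ρ w), ∫⁻ y, ρ y ^ p ∂μ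

/-- The absolute value of an extended real, as an element of `[0,∞]`. -/
noncomputable def eAbs (x : EReal) : ℝ≥0∞ :=
  if max x (-x) = (⊤ : EReal) then ⊤ else ENNReal.ofReal (max x (-x)).toReal

/-- `g` is an upper gradient of `u : Ω → [-∞,∞]` (arc length weighted by `w`). -/
def IsUpperGradientOn {Y : Type*} (D : Y → Y → ℝ) (w : Y → ℝ≥0∞) (Ω : Set Y)
    (u : Y → EReal) (g : Y → ℝ≥0∞) : Prop :=
  ∀ γ : CurveD Y D, γ.inSet Ω →
    eAbs (u (γ.toFun γ.len) - u (γ.toFun 0)) ≤ lineInt γ g w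

/-- `g` is a `p`-weak upper gradient of `u` in `Ω`: the upper gradient
inequality holds along `p`-almost every curve. -/
def IsPWUGOn {Y : Type*} [MeasurableSpace Y] (D : Y → Y → ℝ) (p : ℝ) (μ : Measure Y)
    (w : Y → ℝ≥0∞) (Ω : Set Y) (u : Y → EReal) (g : Y → ℝ≥0∞) : Prop :=
  ∃ Γ₀ : Set (CurveD Y D), pMod p μ w Γ₀ = 0 ∧
    ∀ γ : CurveD Y D, γ.inSet Ω → γ ∉ Γ₀ →
      eAbs (u (γ.toFun γ.len) - u (γ.toFun 0)) ≤ lineInt γ g w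

/-- `g` has locally finite `p`-energy in `Ω`. -/
def IsLocLp {Y : Type*} [MetricSpace Y] [MeasurableSpace Y] (p : ℝ) (μ : Measure Y)
    (Ω : Set Y) (g : Y → ℝ≥0∞) : Prop :=
  ∀ x ∈ Ω, ∃ r > (0:ℝ), ∫⁻ y in Ω ∩ Metric.ball x r, g y ^ p ∂μ < ⊤

/-- `g` is the minimal `p`-weak upper gradient of `u` in `Ω`. -/
def IsMinimalPWUGOn {Y : Type*} [MetricSpace Y] [MeasurableSpace Y] (D : Y → Y → ℝ) (p : ℝ)
    (μ : Measure Y) (w : Y → ℝ≥0∞) (Ω : Set Y) (u : Y → EReal) (g : Y → ℝ≥0∞) : Prop :=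
  IsPWUGOn D p μ w Ω u g ∧ IsLocLp p μ Ω g ∧
    ∀ h : Y → ℝ≥0∞, IsPWUGOn D p μ w Ω u h → IsLocLp p μ Ω h →
      ∀ᵐ x ∂(μ.restrict Ω), g x ≤ h x

/-- The `p`-th power of the Newtonian norm of `u` on `Ω`. -/
noncomputable def NpNormP {Y : Type*} [MeasurableSpace Y] (D : Y → Y → ℝ) (p : ℝ)
    (μ : Measure Y) (w : Y → ℝ≥0∞) (Ω : Set Y) (u : Y → EReal) : ℝ≥0∞ :=
  (∫⁻ x in Ω, eAbs (u x) ^ p ∂μ) +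
    ⨅ (g : Y → ℝ≥0∞) (_ : IsUpperGradientOn D w Ω u g), ∫⁻ x in Ω, g x ^ p ∂μ

/-- The Sobolev capacity of `E`. -/
noncomputable def sobCap {Y : Type*} [MeasurableSpace Y] (D : Y → Y → ℝ) (p : ℝ)
    (μ : Measure Y) (w : Y → ℝ≥0∞) (E : Set Y) : ℝ≥0∞ :=
  ⨅ (u : Y → EReal) (_ : ∀ x ∈ E, 1 ≤ u x), NpNormP D p μ w Set.univ u

/-- The sphericalized arc length weight `ds̃ = ds/(1+d(x,a))²`. -/
noncomputable def hatW {X : Type*} [MetricSpace X] (a : X) : X → ℝ≥0∞ :=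
  fun x => ENNReal.ofReal ((1 + dist x a) ^ 2)⁻¹

/-- The sphericalization measure `dμ̂ₐ = dμ/(1+d(x,a))^{2p}`. -/
noncomputable def muHat {X : Type*} [MetricSpace X] [MeasurableSpace X] (μ : Measure X)
    (a : X) (p : ℝ) : Measure X :=
  μ.withDensity fun x => ENNReal.ofReal ((1 + dist x a) ^ (2 * p))⁻¹

/-- A `q`-Poincaré inequality for `(X,d,μ)`. -/
def PoincareIneqP {X : Type*} [MetricSpace X] [MeasurableSpace X] (q : ℝ) (μ : Measure X) : Prop :=
  ∃ C > (0:ℝ), ∃ lam ≥ (1:ℝ), ∀ (u : X → ℝ) (g : X → ℝ≥0∞), Measurable u → Measurable g →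
    MeasureTheory.LocallyIntegrable u μ →
    IsUpperGradientOn dist (fun _ => 1) Set.univ (fun x => (u x : EReal)) g →
    ∀ (x : X) (r : ℝ), 0 < r →
      ⨍⁻ y in Metric.ball x r, ENNReal.ofReal |u y - ⨍ z in Metric.ball x r, u z ∂μ| ∂μ ≤
        ENNReal.ofReal (C * Metric.diam (Metric.ball x r)) *
          (⨍⁻ y in Metric.ball x (lam * r), g y ^ q ∂μ) ^ (1/q)

/-- `μ` is doubling and all balls have positive finite measure. -/
def DoublingMeas {X : Type*} [MetricSpace X] [MeasurableSpace X] (μ : Measure X) : Prop :=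
  (∀ (x : X) (r : ℝ), 0 < r → 0 < μ (Metric.ball x r) ∧ μ (Metric.ball x r) < ⊤) ∧
    ∃ C > (0:ℝ), ∀ (x : X) (r : ℝ), 0 < r →
      μ (Metric.ball x (2 * r)) ≤ ENNReal.ofReal C * μ (Metric.ball x r)

/-- `μ` is Ahlfors `Q`-regular. -/
def AhlforsRegular {X : Type*} [MetricSpace X] [MeasurableSpace X] (μ : Measure X) (Q : ℝ) : Prop :=
  ∃ C > (0:ℝ), ∀ (x : X) (r : ℝ), 0 < r →
    ENNReal.ofReal (C⁻¹ * r ^ Q) ≤ μ (Metric.ball x r) ∧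
      μ (Metric.ball x r) ≤ ENNReal.ofReal (C * r ^ Q)

/-- `u` is a `p`-superminimizer in `Ω`: for all nonnegative Lipschitz `φ`
with compact support in `Ω`, `∫_{φ≠0} g_u^p dμ ≤ ∫_{φ≠0} g_{u+φ}^p dμ`. -/
def IsSuperminimizerOn {X : Type*} [MetricSpace X] [MeasurableSpace X] (D : X → X → ℝ)
    (p : ℝ) (μ : Measure X) (w : X → ℝ≥0∞) (Ω : Set X) (u : X → ℝ) : Prop :=
  ∀ φ : X → ℝ, (∃ K : NNReal, LipschitzWith K φ) → HasCompactSupport φ →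
    tsupport φ ⊆ Ω → (∀ x, 0 ≤ φ x) →
    ∀ g gφ : X → ℝ≥0∞,
      IsMinimalPWUGOn D p μ w Ω (fun x => (u x : EReal)) g →
      IsMinimalPWUGOn D p μ w Ω (fun x => ((u x + φ x : ℝ) : EReal)) gφ →
      ∫⁻ x in {x | φ x ≠ 0}, g x ^ p ∂μ ≤ ∫⁻ x in {x | φ x ≠ 0}, gφ x ^ p ∂μ

/-- `u` is a `p`-minimizer in `Ω` (test functions of arbitrary sign). -/
def IsMinimizerOn {X : Type*} [MetricSpace X] [MeasurableSpace X] (D : X → X → ℝ)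
    (p : ℝ) (μ : Measure X) (w : X → ℝ≥0∞) (Ω : Set X) (u : X → ℝ) : Prop :=
  ∀ φ : X → ℝ, (∃ K : NNReal, LipschitzWith K φ) → HasCompactSupport φ →
    tsupport φ ⊆ Ω →
    ∀ g gφ : X → ℝ≥0∞,
      IsMinimalPWUGOn D p μ w Ω (fun x => (u x : EReal)) g →
      IsMinimalPWUGOn D p μ w Ω (fun x => ((u x + φ x : ℝ) : EReal)) gφ →
      ∫⁻ x in {x | φ x ≠ 0}, g x ^ p ∂μ ≤ ∫⁻ x in {x | φ x ≠ 0}, gφ x ^ p ∂μ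

/-- The lsc-regularization `u*(x) = lim_{r→0} essinf_{B(x,r)} u`. -/
noncomputable def lscReg {X : Type*} [MetricSpace X] [MeasurableSpace X]
    (μ : Measure X) (u : X → EReal) (x : X) : EReal :=
  ⨆ (r : ℝ) (_ : 0 < r), essInf u (μ.restrict (Metric.ball x r))

/-- `u : Ω → (-∞,∞]` is superharmonic: lsc-regularized and all truncations
`min{u,k}` are superminimizers. -/
def IsSuperharmonicOn {X : Type*} [MetricSpace X] [MeasurableSpace X] (D : X → X → ℝ)
    (p : ℝ) (μ : Measure X) (w : X → ℝ≥0∞) (Ω : Set X) (u : X → EReal) : Prop :=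
  (∀ x ∈ Ω, u x ≠ ⊥) ∧ (∀ x ∈ Ω, u x = lscReg (μ.restrict Ω) u x) ∧
  ∀ k : ℤ, IsSuperminimizerOn D p μ w Ω (fun x => (min (u x) ((k : ℝ) : EReal)).toReal)

set_option linter.unusedSectionVars false
set_option linter.unusedVariables false

section Aux

noncomputable def sphC {X : Type*} [MetricSpace X] (a : X) : X → ℝ≥0∞ :=
  fun x => ENNReal.ofReal ((1 + dist x a) ^ 2)

noncomputable def sphDens {X : Type*} [MetricSpace X] (a : X) (p : ℝ) : X → ℝ≥0∞ :=
  fun x => ENNReal.ofReal ((1 + dist x a) ^ (2 * p))⁻¹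

variable {X : Type*} [MetricSpace X] [MeasurableSpace X] [BorelSpace X] {a : X} {p : ℝ}

lemma base_pos (a x : X) : (0:ℝ) < (1 + dist x a) ^ 2 := by positivity

lemma hatW_mul_sphC (a : X) (x : X) : hatW a x * sphC a x = 1 := by
  rw [hatW, sphC, ← ENNReal.ofReal_mul (by positivity),
    inv_mul_cancel₀ (base_pos a x).ne', ENNReal.ofReal_one]

lemma sphC_mul_hatW (a : X) (x : X) : sphC a x * hatW a x = 1 := by
  rw [mul_comm]; exact hatW_mul_sphC a x

lemma mul_hatW_mul_sphC (h : X → ℝ≥0∞) (x : X) : h x * hatW a x * sphC a x = h x := by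
  rw [mul_assoc, hatW_mul_sphC, mul_one]

lemma mul_sphC_mul_hatW (h : X → ℝ≥0∞) (x : X) : h x * sphC a x * hatW a x = h x := by
  rw [mul_assoc, sphC_mul_hatW, mul_one]

lemma hatW_rpow (hp : 0 < p) (a : X) (x : X) : hatW a x ^ p = sphDens a p x := by
  rw [hatW, sphDens, ENNReal.ofReal_rpow_of_pos (by positivity),
    Real.inv_rpow (base_pos a x).le]
  congr 2
  rw [← Real.rpow_natCast (1 + dist x a) 2, ← Real.rpow_mul (by positivity)]
  norm_num

lemma measurable_hatW (a : X) : Measurable (hatW a) := by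
  apply ENNReal.measurable_ofReal.comp
  exact ((continuous_const.add (continuous_id.dist continuous_const)).pow 2).measurable.inv

lemma measurable_sphDens (a : X) (p : ℝ) : Measurable (sphDens a p) := by
  apply ENNReal.measurable_ofReal.comp
  apply Measurable.inv
  exact ((continuous_const.add (continuous_id.dist continuous_const)).rpow_const (fun x => Or.inl (by positivity : (1 + dist x a) ≠ 0))).measurable


lemma measurable_sphC (a : X) : Measurable (sphC a) := by
  apply ENNReal.measurable_ofReal.comp
  exact ((continuous_const.add (continuous_id.dist continuous_const)).pow 2).measurable

lemma muHat_eq (μ : Measure X) (a : X) (p : ℝ) :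
    muHat μ a p = μ.withDensity (sphDens a p) := rfl

lemma energyId (hp : 0 < p) (μ : Measure X) (a : X) (h : X → ℝ≥0∞) {S : Set X}
    (hS : MeasurableSet S) :
    ∫⁻ x in S, (h x * hatW a x) ^ p ∂μ = ∫⁻ x in S, h x ^ p ∂(muHat μ a p) := by
  rw [muHat_eq, MeasureTheory.restrict_withDensity hS,
    lintegral_withDensity_eq_lintegral_mul_non_measurable _ (measurable_sphDens a p)
      (Filter.Eventually.of_forall fun x => ENNReal.ofReal_lt_top)]
  refine lintegral_congr fun x => ?_
  simp only [Pi.mul_apply]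
  rw [ENNReal.mul_rpow_of_nonneg _ _ hp.le, hatW_rpow hp, mul_comm]

lemma energyId' (hp : 0 < p) (μ : Measure X) (a : X) (h : X → ℝ≥0∞) {S : Set X}
    (hS : MeasurableSet S) :
    ∫⁻ x in S, h x ^ p ∂μ = ∫⁻ x in S, (h x * sphC a x) ^ p ∂(muHat μ a p) := by
  rw [← energyId hp μ a _ hS]
  exact lintegral_congr fun x => by rw [mul_sphC_mul_hatW]

lemma lineInt_mul_hatW (a : X) (γ : CurveD X dist) (ρ : X → ℝ≥0∞) :
    lineInt γ (fun x => ρ x * hatW a x) (fun _ => 1) = lineInt γ ρ (hatW a) := by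
  simp [lineInt]

lemma lineInt_mul_sphC (a : X) (γ : CurveD X dist) (ρ : X → ℝ≥0∞) :
    lineInt γ (fun x => ρ x * sphC a x) (hatW a) = lineInt γ ρ (fun _ => 1) := by
  unfold lineInt
  refine lintegral_congr fun t => ?_
  simp only
  rw [mul_sphC_mul_hatW fun x => ρ x, mul_one]

lemma pMod_eq (hp : 0 < p) (μ : Measure X) (a : X) (Γ : Set (CurveD X dist)) :
    pMod p (muHat μ a p) (hatW a) Γ = pMod p μ (fun _ => 1) Γ := by
  apply le_antisymm
  · refine le_iInf fun ρ => le_iInf fun hm => le_iInf fun hadm => ?_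
    refine iInf_le_of_le (fun x => ρ x * sphC a x) ?_
    refine iInf_le_of_le (hm.mul (measurable_sphC a)) ?_
    refine iInf_le_of_le (fun γ hγ => by rw [lineInt_mul_sphC]; exact hadm γ hγ) ?_
    rw [← setLIntegral_univ (μ := muHat μ a p), ← setLIntegral_univ (μ := μ),
      ← energyId' hp μ a ρ MeasurableSet.univ]
  · refine le_iInf fun ρ => le_iInf fun hm => le_iInf fun hadm => ?_
    refine iInf_le_of_le (fun x => ρ x * hatW a x) ?_
    refine iInf_le_of_le (hm.mul (measurable_hatW a)) ?_
    refine iInf_le_of_le (fun γ hγ => by rw [lineInt_mul_hatW]; exact hadm γ hγ) ?_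
    rw [← setLIntegral_univ (μ := muHat μ a p), ← setLIntegral_univ (μ := μ),
      energyId hp μ a ρ MeasurableSet.univ]

lemma pwug_iff (hp : 0 < p) (μ : Measure X) (a : X) (Ω : Set X) (u : X → EReal)
    (h : X → ℝ≥0∞) :
    IsPWUGOn dist p (muHat μ a p) (hatW a) Ω u h ↔
      IsPWUGOn dist p μ (fun _ => 1) Ω u (fun x => h x * hatW a x) := by
  constructor
  · rintro ⟨Γ₀, h0, hub⟩
    refine ⟨Γ₀, by rw [← pMod_eq hp μ a]; exact h0, fun γ hγ hγ0 => ?_⟩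
    rw [lineInt_mul_hatW]; exact hub γ hγ hγ0
  · rintro ⟨Γ₀, h0, hub⟩
    refine ⟨Γ₀, by rw [pMod_eq hp μ a]; exact h0, fun γ hγ hγ0 => ?_⟩
    rw [← lineInt_mul_hatW a γ h]; exact hub γ hγ hγ0

lemma locLp_iff (hp : 0 < p) (μ : Measure X) (a : X) {Ω : Set X} (hΩ : MeasurableSet Ω)
    (h : X → ℝ≥0∞) :
    IsLocLp p (muHat μ a p) Ω h ↔ IsLocLp p μ Ω (fun x => h x * hatW a x) := by
  refine forall₂_congr fun x hx => exists_congr fun r => and_congr_right fun _ => ?_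
  rw [energyId hp μ a h (hΩ.inter measurableSet_ball)]

lemma ae_withDensity_sphDens (ν : Measure X) (a : X) (p : ℝ) :
    ae (ν.withDensity (sphDens a p)) = ae ν := by
  apply le_antisymm
  · exact (withDensity_absolutelyContinuous ν _).ae_le
  · refine (withDensity_absolutelyContinuous' (measurable_sphDens a p).aemeasurable
      (Filter.Eventually.of_forall fun x => ?_)).ae_le
    simp only [sphDens]
    exact (ENNReal.ofReal_pos.mpr (by positivity)).ne'

lemma ae_muHat_restrict (μ : Measure X) (a : X) (p : ℝ) {Ω : Set X}
    (hΩ : MeasurableSet Ω) :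
    ae ((muHat μ a p).restrict Ω) = ae (μ.restrict Ω) := by
  rw [muHat_eq, MeasureTheory.restrict_withDensity hΩ, ae_withDensity_sphDens]

lemma minimalPWUG_iff (hp : 0 < p) (μ : Measure X) (a : X) {Ω : Set X} (hΩ : MeasurableSet Ω)
    (u : X → EReal) (h : X → ℝ≥0∞) :
    IsMinimalPWUGOn dist p (muHat μ a p) (hatW a) Ω u h ↔
      IsMinimalPWUGOn dist p μ (fun _ => 1) Ω u (fun x => h x * hatW a x) := by
  unfold IsMinimalPWUGOn
  rw [pwug_iff hp, locLp_iff hp μ a hΩ]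
  refine and_congr_right fun _ => and_congr_right fun _ => ?_
  constructor
  · intro hmin h' hpw' hlp'
    have e : (fun x => (h' x * sphC a x) * hatW a x) = h' := funext (mul_sphC_mul_hatW h')
    have h1 : IsPWUGOn dist p (muHat μ a p) (hatW a) Ω u (fun x => h' x * sphC a x) := by
      rw [pwug_iff hp, e]; exact hpw'
    have h2 : IsLocLp p (muHat μ a p) Ω (fun x => h' x * sphC a x) := by
      rw [locLp_iff hp μ a hΩ, e]; exact hlp'
    have h3 := hmin _ h1 h2
    rw [ae_muHat_restrict μ a p hΩ] at h3
    filter_upwards [h3] with x hx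
    calc h x * hatW a x ≤ (h' x * sphC a x) * hatW a x := mul_le_mul_left hx _
      _ = h' x := mul_sphC_mul_hatW h' x
  · intro hmin h' hpw' hlp'
    have h3 := hmin _ ((pwug_iff hp μ a Ω u h').mp hpw') ((locLp_iff hp μ a hΩ h').mp hlp')
    rw [← ae_muHat_restrict μ a p hΩ] at h3
    filter_upwards [h3] with x hx
    calc h x = (h x * hatW a x) * sphC a x := (mul_hatW_mul_sphC h x).symm
      _ ≤ (h' x * hatW a x) * sphC a x := mul_le_mul_left hx _
      _ = h' x := mul_hatW_mul_sphC h' x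

lemma ne_zero_measurable {φ : X → ℝ} (hφ : Continuous φ) :
    MeasurableSet {x | φ x ≠ 0} := by
  have : {x | φ x ≠ 0} = φ ⁻¹' ({0}ᶜ) := rfl
  rw [this]
  exact hφ.measurable (measurableSet_singleton 0).compl

lemma supermin_iff (hp : 0 < p) (μ : Measure X) (a : X) {Ω : Set X}
    (hΩ : MeasurableSet Ω) (u : X → ℝ) :
    IsSuperminimizerOn dist p μ (fun _ => 1) Ω u ↔
      IsSuperminimizerOn dist p (muHat μ a p) (hatW a) Ω u := by
  constructor
  · intro H φ hlip hsupp hsub hpos g gφ hg hgφ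
    obtain ⟨K, hK⟩ := hlip
    have hS : MeasurableSet {x | φ x ≠ 0} := ne_zero_measurable hK.continuous
    have h3 := H φ ⟨K, hK⟩ hsupp hsub hpos (fun x => g x * hatW a x)
      (fun x => gφ x * hatW a x) ((minimalPWUG_iff hp μ a hΩ _ g).mp hg)
      ((minimalPWUG_iff hp μ a hΩ _ gφ).mp hgφ)
    rw [energyId hp μ a g hS, energyId hp μ a gφ hS] at h3
    exact h3
  · intro H φ hlip hsupp hsub hpos g gφ hg hgφ
    obtain ⟨K, hK⟩ := hlip
    have hS : MeasurableSet {x | φ x ≠ 0} := ne_zero_measurable hK.continuous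
    have e : ∀ h : X → ℝ≥0∞, (fun x => (h x * sphC a x) * hatW a x) = h :=
      fun h => funext (mul_sphC_mul_hatW h)
    have hg' : IsMinimalPWUGOn dist p (muHat μ a p) (hatW a) Ω
        (fun x => ((u x : ℝ) : EReal)) (fun x => g x * sphC a x) := by
      rw [minimalPWUG_iff hp μ a hΩ, e]; exact hg
    have hgφ' : IsMinimalPWUGOn dist p (muHat μ a p) (hatW a) Ω
        (fun x => ((u x + φ x : ℝ) : EReal)) (fun x => gφ x * sphC a x) := by
      rw [minimalPWUG_iff hp μ a hΩ, e]; exact hgφ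
    have h3 := H φ ⟨K, hK⟩ hsupp hsub hpos _ _ hg' hgφ'
    rw [energyId' hp μ a g hS, energyId' hp μ a gφ hS]
    exact h3

lemma minimizer_iff (hp : 0 < p) (μ : Measure X) (a : X) {Ω : Set X}
    (hΩ : MeasurableSet Ω) (u : X → ℝ) :
    IsMinimizerOn dist p μ (fun _ => 1) Ω u ↔
      IsMinimizerOn dist p (muHat μ a p) (hatW a) Ω u := by
  constructor
  · intro H φ hlip hsupp hsub g gφ hg hgφ
    obtain ⟨K, hK⟩ := hlip
    have hS : MeasurableSet {x | φ x ≠ 0} := ne_zero_measurable hK.continuous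
    have h3 := H φ ⟨K, hK⟩ hsupp hsub (fun x => g x * hatW a x)
      (fun x => gφ x * hatW a x) ((minimalPWUG_iff hp μ a hΩ _ g).mp hg)
      ((minimalPWUG_iff hp μ a hΩ _ gφ).mp hgφ)
    rw [energyId hp μ a g hS, energyId hp μ a gφ hS] at h3
    exact h3
  · intro H φ hlip hsupp hsub g gφ hg hgφ
    obtain ⟨K, hK⟩ := hlip
    have hS : MeasurableSet {x | φ x ≠ 0} := ne_zero_measurable hK.continuous
    have e : ∀ h : X → ℝ≥0∞, (fun x => (h x * sphC a x) * hatW a x) = h :=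
      fun h => funext (mul_sphC_mul_hatW h)
    have hg' : IsMinimalPWUGOn dist p (muHat μ a p) (hatW a) Ω
        (fun x => ((u x : ℝ) : EReal)) (fun x => g x * sphC a x) := by
      rw [minimalPWUG_iff hp μ a hΩ, e]; exact hg
    have hgφ' : IsMinimalPWUGOn dist p (muHat μ a p) (hatW a) Ω
        (fun x => ((u x + φ x : ℝ) : EReal)) (fun x => gφ x * sphC a x) := by
      rw [minimalPWUG_iff hp μ a hΩ, e]; exact hgφ
    have h3 := H φ ⟨K, hK⟩ hsupp hsub _ _ hg' hgφ'
    rw [energyId' hp μ a g hS, energyId' hp μ a gφ hS]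
    exact h3

lemma lscReg_eq (μ : Measure X) (a : X) (p : ℝ) {Ω : Set X} (hΩ : MeasurableSet Ω)
    (u : X → EReal) (x : X) :
    lscReg ((muHat μ a p).restrict Ω) u x = lscReg (μ.restrict Ω) u x := by
  unfold lscReg
  refine iSup_congr fun r => iSup_congr fun hr => ?_
  show Filter.liminf u (ae _) = Filter.liminf u (ae _)
  rw [muHat_eq, MeasureTheory.restrict_withDensity hΩ,
    MeasureTheory.restrict_withDensity measurableSet_ball, ae_withDensity_sphDens]

end Aux

/-- Superminimizers, minimizers, `p`-harmonic functions and superharmonic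
functions in `Ω ⊂ X` are the same with respect to `(d,μ)` and with respect
to the sphericalization `(d̂_a, μ̂_a)`. -/
theorem superminimizer_sphericalization_invariant {X : Type*} [MetricSpace X]
    [MeasurableSpace X] [BorelSpace X] (μ : Measure X) (a : X) (p : ℝ) (hp : 1 < p)
    (Ω : Set X) (hΩ : IsOpen Ω) :
    (∀ u : X → ℝ,
      IsSuperminimizerOn dist p μ (fun _ => 1) Ω u ↔
        IsSuperminimizerOn dist p (muHat μ a p) (hatW a) Ω u) ∧
    (∀ u : X → ℝ,
      IsMinimizerOn dist p μ (fun _ => 1) Ω u ↔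
        IsMinimizerOn dist p (muHat μ a p) (hatW a) Ω u) ∧
    (∀ u : X → ℝ,
      (ContinuousOn u Ω ∧ IsMinimizerOn dist p μ (fun _ => 1) Ω u) ↔
        (ContinuousOn u Ω ∧ IsMinimizerOn dist p (muHat μ a p) (hatW a) Ω u)) ∧
    (∀ u : X → EReal,
      IsSuperharmonicOn dist p μ (fun _ => 1) Ω u ↔
        IsSuperharmonicOn dist p (muHat μ a p) (hatW a) Ω u) := by
  have hp0 : (0:ℝ) < p := lt_trans one_pos hp
  have hΩm : MeasurableSet Ω := hΩ.measurableSet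
  refine ⟨fun u => supermin_iff hp0 μ a hΩm u, fun u => minimizer_iff hp0 μ a hΩm u,
    fun u => and_congr_right fun _ => minimizer_iff hp0 μ a hΩm u, fun u => ?_⟩
  constructor
  · rintro ⟨h1, h2, h3⟩
    refine ⟨h1, fun x hx => ?_, fun k => (supermin_iff hp0 μ a hΩm _).mp (h3 k)⟩
    rw [lscReg_eq μ a p hΩm]
    exact h2 x hx
  · rintro ⟨h1, h2, h3⟩
    refine ⟨h1, fun x hx => ?_, fun k => (supermin_iff hp0 μ a hΩm _).mpr (h3 k)⟩
    rw [← lscReg_eq μ a p hΩm]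
    exact h2 x hx
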